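/- Let A ∈ M_{p,q}(ℂ) with ‖A‖ < 1. Then the map H_A(Z) = (I_p - AA*)^{-1/2}(Z + A)(I_q + A*Z)⁻¹(I_q - A*A)^{1/2} maps {Z ∈ M_{p,q}(ℂ) : ‖Z‖ < 1} into itself. -/

import Mathlib

open scoped Matrix.Norms.L2Operator ComplexOrder
open Matrix

/-- The positive semidefinite square root of a positive semidefinite matrix
(the definition `Matrix.PosSemidef.sqrt` of the older Mathlib, since removed). -/
noncomputable def Matrix.PosSemidef.sqrt {n 𝕜 : Type*} [Fintype n] [DecidableEq n] [RCLike 𝕜]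
    {A : Matrix n n 𝕜} (hA : A.PosSemidef) : Matrix n n 𝕜 :=
  hA.1.eigenvectorUnitary.1 * diagonal ((↑) ∘ (√·) ∘ hA.1.eigenvalues) *
  (star hA.1.eigenvectorUnitary : Matrix n n 𝕜)

lemma Matrix.PosSemidef.sqrt_mul_self {n 𝕜 : Type*} [Fintype n] [DecidableEq n] [RCLike 𝕜]
    {A : Matrix n n 𝕜} (hA : A.PosSemidef) : hA.sqrt * hA.sqrt = A := by
  have hU : (star hA.1.eigenvectorUnitary : Matrix n n 𝕜) * hA.1.eigenvectorUnitary.1 = 1 := by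
    simp
  conv_rhs => rw [hA.1.spectral_theorem, Unitary.conjStarAlgAut_apply]
  unfold Matrix.PosSemidef.sqrt
  simp only [Matrix.mul_assoc]
  rw [← Matrix.mul_assoc (star hA.1.eigenvectorUnitary : Matrix n n 𝕜), hU, Matrix.one_mul,
    ← Matrix.mul_assoc (diagonal _) (diagonal _), diagonal_mul_diagonal]
  congr 3
  funext i
  simp only [Function.comp_apply, ← RCLike.ofReal_mul, Real.mul_self_sqrt (hA.eigenvalues_nonneg i)]

lemma Matrix.PosSemidef.sqrt_conjTranspose {n 𝕜 : Type*} [Fintype n] [DecidableEq n] [RCLike 𝕜]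
    {A : Matrix n n 𝕜} (hA : A.PosSemidef) : hA.sqrt ᴴ = hA.sqrt := by
  have hs : star (RCLike.ofReal ∘ (fun x => √x) ∘ hA.1.eigenvalues : n → 𝕜)
      = RCLike.ofReal ∘ (fun x => √x) ∘ hA.1.eigenvalues := by
    funext i; simp [RCLike.star_def]
  unfold Matrix.PosSemidef.sqrt
  rw [conjTranspose_mul, conjTranspose_mul, diagonal_conjTranspose]
  simp [Matrix.mul_assoc, star_eq_conjTranspose, hs]

section Helpers

variable {m n : Type*} [Fintype m] [Fintype n] [DecidableEq m] [DecidableEq n]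

set_option linter.unusedSectionVars false in
lemma myPosDef_one_sub (A : Matrix m n ℂ) (hA : ‖A‖ < 1) : (1 - Aᴴ * A).PosDef := by
  refine Matrix.PosDef.of_dotProduct_mulVec_pos (Matrix.isHermitian_one.sub (isHermitian_conjTranspose_mul_self A)) fun x hx => ?_
  have h1 : star x ⬝ᵥ (1 - Aᴴ * A) *ᵥ x
      = star x ⬝ᵥ x - star (A *ᵥ x) ⬝ᵥ (A *ᵥ x) := by
    rw [sub_mulVec, dotProduct_sub, one_mulVec, ← mulVec_mulVec, dotProduct_mulVec,
      vecMul_conjTranspose, star_star]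
  set x' : EuclideanSpace ℂ n := (WithLp.equiv 2 _).symm x with hx'
  set y' : EuclideanSpace ℂ m := (WithLp.equiv 2 _).symm (A *ᵥ x) with hy'
  have h2 : star x ⬝ᵥ x = (‖x'‖ : ℂ) ^ 2 := by
    rw [dotProduct_comm, ← EuclideanSpace.inner_toLp_toLp, inner_self_eq_norm_sq_to_K]; rfl
  have h3 : star (A *ᵥ x) ⬝ᵥ (A *ᵥ x) = (‖y'‖ : ℂ) ^ 2 := by
    rw [dotProduct_comm, ← EuclideanSpace.inner_toLp_toLp, inner_self_eq_norm_sq_to_K]; rfl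
  have h4 : ‖y'‖ ≤ ‖A‖ * ‖x'‖ := A.l2_opNorm_mulVec x'
  have h5 : (0:ℝ) < ‖x'‖ := by
    rw [norm_pos_iff]
    simpa [hx', WithLp.equiv] using hx
  rw [h1, h2, h3]
  have : ((‖x'‖:ℂ))^2 - ((‖y'‖:ℂ))^2 = ((‖x'‖^2 - ‖y'‖^2 : ℝ) : ℂ) := by push_cast; ring
  rw [this]
  rw [Complex.zero_lt_real]
  have h6 : ‖y'‖ < ‖x'‖ := lt_of_le_of_lt h4 (by nlinarith [norm_nonneg A])
  nlinarith [norm_nonneg y']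

set_option linter.unusedSectionVars false in
lemma myNormS_lt_one {S : Matrix n n ℂ} (hS : S.PosSemidef) (h : (1 - S).PosDef) :
    ‖S‖ < 1 := by
  cases isEmpty_or_nonempty n with
  | inl h' =>
    have : S = 0 := Subsingleton.elim _ _
    rw [this, norm_zero]; exact one_pos
  | inr h' =>
    letI : CStarAlgebra (Matrix n n ℂ) := Matrix.instCStarAlgebra
    have hherm := hS.isHermitian
    have hsa : IsSelfAdjoint S := hherm
    have heig : ∀ i, hherm.eigenvalues i < 1 := by
      intro i
      have h1 : hherm.eigenvalues i ∈ spectrum ℝ S := hherm.eigenvalues_mem_spectrum_real i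
      have h2 : (1 : ℝ) - hherm.eigenvalues i ∈ spectrum ℝ (1 - S) := by
        rw [spectrum.mem_iff] at h1 ⊢
        intro hc
        apply h1
        have he : algebraMap ℝ (Matrix n n ℂ) (1 - hherm.eigenvalues i) - (1 - S)
            = -(algebraMap ℝ (Matrix n n ℂ) (hherm.eigenvalues i) - S) := by
          rw [map_sub, _root_.map_one]; abel
        rw [he] at hc
        exact (IsUnit.neg_iff _).mp hc
      rw [h.isHermitian.spectrum_real_eq_range_eigenvalues] at h2
      obtain ⟨j, hj⟩ := h2
      have := h.eigenvalues_pos j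
      linarith [hj ▸ this]
    set t : ℝ := Finset.univ.sup' Finset.univ_nonempty hherm.eigenvalues with ht
    have htlt : t < 1 := by
      rw [ht, Finset.sup'_lt_iff]
      exact fun i _ => heig i
    have hbound : spectralRadius ℂ S ≤ (t.toNNReal : NNReal) := by
      rw [spectralRadius]
      refine iSup₂_le fun z hz => ?_
      have hz' : z = (z.re : ℂ) := hsa.mem_spectrum_eq_re hz
      have hzre : z.re ∈ spectrum ℝ S := by
        rw [← spectrum.preimage_algebraMap ℂ]
        simpa [← hz'] using hz
      rw [hherm.spectrum_real_eq_range_eigenvalues] at hzre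
      obtain ⟨i, hi⟩ := hzre
      have h0 : 0 ≤ hherm.eigenvalues i := hS.eigenvalues_nonneg i
      have hle : hherm.eigenvalues i ≤ t := Finset.le_sup' _ (Finset.mem_univ i)
      rw [hz', ← hi]
      rw [Complex.nnnorm_real, Real.nnnorm_of_nonneg h0, ← Real.toNNReal_of_nonneg h0]
      exact_mod_cast Real.toNNReal_le_toNNReal hle
    have hfin : (‖S‖₊ : ENNReal) ≤ (t.toNNReal : NNReal) := hsa.spectralRadius_eq_nnnorm ▸ hbound
    have : ‖S‖₊ ≤ t.toNNReal := by exact_mod_cast hfin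
    calc ‖S‖ ≤ (t.toNNReal : ℝ) := this
    _ = max t 0 := Real.coe_toNNReal' t
    _ < 1 := by simp [htlt]

set_option linter.unusedSectionVars false in
lemma myConj_posDef {N : Matrix m m ℂ} (hN : N.PosDef) (M : Matrix m n ℂ)
    (hM : ∀ x : n → ℂ, x ≠ 0 → M *ᵥ x ≠ 0) : (Mᴴ * N * M).PosDef := by
  refine Matrix.PosDef.of_dotProduct_mulVec_pos (isHermitian_conjTranspose_mul_mul M hN.1) fun x hx => ?_
  have key : star x ⬝ᵥ (Mᴴ * N * M) *ᵥ x = star (M *ᵥ x) ⬝ᵥ N *ᵥ (M *ᵥ x) := by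
    rw [← mulVec_mulVec, ← mulVec_mulVec, dotProduct_mulVec, vecMul_conjTranspose, star_star]
  rw [key]
  exact hN.dotProduct_mulVec_pos (hM x hx)

set_option linter.unusedSectionVars false in
lemma myNormW_lt_one (W : Matrix m n ℂ) (h : (1 - Wᴴ * W).PosDef) : ‖W‖ < 1 := by
  have h1 : ‖Wᴴ * W‖ < 1 := myNormS_lt_one (posSemidef_conjTranspose_mul_self W) h
  have h2 : ‖Wᴴ * W‖ = ‖W‖ * ‖W‖ := W.l2_opNorm_conjTranspose_mul_self
  nlinarith [norm_nonneg W]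

end Helpers

/-- The nc-ball automorphism `H_A(Z) = (I-AA*)^{-1/2}(Z+A)(I+A*Z)⁻¹(I-A*A)^{1/2}`,
written using the positive semidefinite square roots of `I - AA*` and `I - A*A`. -/
noncomputable def ballMobius {p q : ℕ} (A : Matrix (Fin p) (Fin q) ℂ)
    (hP : (1 - A * Aᴴ).PosSemidef) (hQ : (1 - Aᴴ * A).PosSemidef)
    (Z : Matrix (Fin p) (Fin q) ℂ) : Matrix (Fin p) (Fin q) ℂ :=
  hP.sqrt⁻¹ * (Z + A) * (1 + Aᴴ * Z)⁻¹ * hQ.sqrt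

/-- `H_A` maps the open matrix unit ball into itself. -/
theorem ballMobius_maps_ball {p q : ℕ} (A : Matrix (Fin p) (Fin q) ℂ) (hA : ‖A‖ < 1)
    (hP : (1 - A * Aᴴ).PosSemidef) (hQ : (1 - Aᴴ * A).PosSemidef)
    (Z : Matrix (Fin p) (Fin q) ℂ) (hZ : ‖Z‖ < 1) :
    ‖ballMobius A hP hQ Z‖ < 1 := by
  -- notation
  have hAH : ‖Aᴴ‖ = ‖A‖ := A.l2_opNorm_conjTranspose
  have hQd : (1 - Aᴴ * A).PosDef := myPosDef_one_sub A hA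
  have hPd : (1 - A * Aᴴ).PosDef := by
    have := myPosDef_one_sub Aᴴ (by rw [hAH]; exact hA)
    rwa [conjTranspose_conjTranspose] at this
  have hZd : (1 - Zᴴ * Z).PosDef := myPosDef_one_sub Z hZ
  have hQdet : IsUnit (1 - Aᴴ * A).det := hQd.isUnit.map detMonoidHom
  have hPdet : IsUnit (1 - A * Aᴴ).det := hPd.isUnit.map detMonoidHom
  -- B is invertible
  have hAZ : ‖Aᴴ * Z‖ < 1 := by
    calc ‖Aᴴ * Z‖ ≤ ‖Aᴴ‖ * ‖Z‖ := l2_opNorm_mul _ _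
    _ < 1 := by rw [hAH]; nlinarith [norm_nonneg A, norm_nonneg Z]
  have hBunit : IsUnit (1 + Aᴴ * Z) := by
    refine ⟨Units.oneSub (-(Aᴴ * Z)) (by simpa using hAZ), ?_⟩
    simp [Units.oneSub, sub_neg_eq_add]
  have hBdet : IsUnit (1 + Aᴴ * Z).det := (isUnit_iff_isUnit_det _).mp hBunit
  have hBHdet : IsUnit ((1 + Aᴴ * Z)ᴴ).det := by
    rw [det_conjTranspose]; exact hBdet.star
  -- square roots
  have hSq : hQ.sqrt * hQ.sqrt = 1 - Aᴴ * A := hQ.sqrt_mul_self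
  have hTq : hP.sqrt * hP.sqrt = 1 - A * Aᴴ := hP.sqrt_mul_self
  have hSherm : hQ.sqrt ᴴ = hQ.sqrt := hQ.sqrt_conjTranspose
  have hTherm : hP.sqrt ᴴ = hP.sqrt := hP.sqrt_conjTranspose
  have hSdet : IsUnit hQ.sqrt.det := by
    have : hQ.sqrt.det * hQ.sqrt.det = (1 - Aᴴ * A).det := by rw [← det_mul, hSq]
    rw [isUnit_iff_ne_zero]
    intro hc
    rw [hc, mul_zero] at this
    exact hQdet.ne_zero this.symm
  have hTdet : IsUnit hP.sqrt.det := by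
    have : hP.sqrt.det * hP.sqrt.det = (1 - A * Aᴴ).det := by rw [← det_mul, hTq]
    rw [isUnit_iff_ne_zero]
    intro hc
    rw [hc, mul_zero] at this
    exact hPdet.ne_zero this.symm
  -- key identity
  have hPA : (1 - A * Aᴴ) * A = A * (1 - Aᴴ * A) := by
    simp [Matrix.sub_mul, Matrix.mul_sub, Matrix.mul_assoc]
  have hPinv : (1 - A * Aᴴ)⁻¹ = 1 + A * (1 - Aᴴ * A)⁻¹ * Aᴴ := by
    apply inv_eq_right_inv
    calc (1 - A * Aᴴ) * (1 + A * (1 - Aᴴ * A)⁻¹ * Aᴴ)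
        = (1 - A * Aᴴ) + (1 - A * Aᴴ) * A * (1 - Aᴴ * A)⁻¹ * Aᴴ := by
          rw [Matrix.mul_add, Matrix.mul_one, ← Matrix.mul_assoc, ← Matrix.mul_assoc]
    _ = (1 - A * Aᴴ) + A * ((1 - Aᴴ * A) * (1 - Aᴴ * A)⁻¹) * Aᴴ := by
          rw [hPA, Matrix.mul_assoc A (1 - Aᴴ * A) _]
    _ = (1 - A * Aᴴ) + A * Aᴴ := by rw [Matrix.mul_nonsing_inv _ hQdet, Matrix.mul_one]
    _ = 1 := by abel
  have hAC : Aᴴ * (Z + A) = (1 + Aᴴ * Z) - (1 - Aᴴ * A) := by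
    rw [Matrix.mul_add]; abel
  have hCA : (Z + A)ᴴ * A = (1 + Aᴴ * Z)ᴴ - (1 - Aᴴ * A) := by
    have := congrArg conjTranspose hAC
    rw [conjTranspose_mul, conjTranspose_conjTranspose, conjTranspose_sub, hQd.1.eq] at this
    exact this
  have hKey : (Z + A)ᴴ * (1 - A * Aᴴ)⁻¹ * (Z + A)
      = (1 + Aᴴ * Z)ᴴ * (1 - Aᴴ * A)⁻¹ * (1 + Aᴴ * Z) - (1 - Zᴴ * Z) := by
    rw [hPinv]
    calc (Z + A)ᴴ * (1 + A * (1 - Aᴴ * A)⁻¹ * Aᴴ) * (Z + A)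
        = (Z + A)ᴴ * (Z + A)
            + ((Z + A)ᴴ * A) * (1 - Aᴴ * A)⁻¹ * (Aᴴ * (Z + A)) := by
          simp only [Matrix.mul_add, Matrix.add_mul, Matrix.mul_one, Matrix.one_mul,
            Matrix.mul_assoc]
          abel
    _ = (Z + A)ᴴ * (Z + A)
            + ((1 + Aᴴ * Z)ᴴ - (1 - Aᴴ * A)) * (1 - Aᴴ * A)⁻¹
              * ((1 + Aᴴ * Z) - (1 - Aᴴ * A)) := by rw [hAC, hCA]
    _ = (Z + A)ᴴ * (Z + A)
            + ((1 + Aᴴ * Z)ᴴ * (1 - Aᴴ * A)⁻¹ * (1 + Aᴴ * Z)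
              - (1 + Aᴴ * Z)ᴴ * ((1 - Aᴴ * A)⁻¹ * (1 - Aᴴ * A))
              - ((1 - Aᴴ * A) * (1 - Aᴴ * A)⁻¹) * (1 + Aᴴ * Z)
              + ((1 - Aᴴ * A) * (1 - Aᴴ * A)⁻¹) * (1 - Aᴴ * A)) := by
          simp only [Matrix.sub_mul, Matrix.mul_sub, Matrix.mul_add, Matrix.add_mul,
            Matrix.mul_one, Matrix.one_mul, Matrix.mul_assoc]
          abel
    _ = (Z + A)ᴴ * (Z + A)
            + ((1 + Aᴴ * Z)ᴴ * (1 - Aᴴ * A)⁻¹ * (1 + Aᴴ * Z)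
              - (1 + Aᴴ * Z)ᴴ - (1 + Aᴴ * Z) + (1 - Aᴴ * A)) := by
          rw [Matrix.nonsing_inv_mul _ hQdet, Matrix.mul_nonsing_inv _ hQdet,
            Matrix.mul_one, Matrix.one_mul, Matrix.one_mul]
    _ = (1 + Aᴴ * Z)ᴴ * (1 - Aᴴ * A)⁻¹ * (1 + Aᴴ * Z) - (1 - Zᴴ * Z) := by
          simp only [conjTranspose_add, Matrix.add_mul, Matrix.mul_add, conjTranspose_one,
            conjTranspose_mul, conjTranspose_conjTranspose]
          abel
  -- main computation
  set W := ballMobius A hP hQ Z with hW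
  have hMain : 1 - Wᴴ * W
      = ((1 + Aᴴ * Z)⁻¹ * hQ.sqrt)ᴴ * (1 - Zᴴ * Z) * ((1 + Aᴴ * Z)⁻¹ * hQ.sqrt) := by
    have hWW : Wᴴ * W = hQ.sqrt * (((1 + Aᴴ * Z)ᴴ)⁻¹ * ((Z + A)ᴴ
        * ((1 - A * Aᴴ)⁻¹ * ((Z + A) * ((1 + Aᴴ * Z)⁻¹ * hQ.sqrt))))) := by
      rw [hW, ballMobius]
      have hTT : hP.sqrt⁻¹ * hP.sqrt⁻¹ = (1 - A * Aᴴ)⁻¹ := by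
        rw [← Matrix.mul_inv_rev, hTq]
      simp only [conjTranspose_mul, Matrix.conjTranspose_nonsing_inv, hSherm, hTherm,
        Matrix.mul_assoc]
      rw [← Matrix.mul_assoc (hP.sqrt⁻¹) (hP.sqrt⁻¹), hTT]
    rw [hWW]
    have hstep : (Z + A)ᴴ * ((1 - A * Aᴴ)⁻¹ * ((Z + A) * ((1 + Aᴴ * Z)⁻¹ * hQ.sqrt)))
        = ((1 + Aᴴ * Z)ᴴ * (1 - Aᴴ * A)⁻¹ * (1 + Aᴴ * Z) - (1 - Zᴴ * Z))
            * ((1 + Aᴴ * Z)⁻¹ * hQ.sqrt) := by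
      rw [← Matrix.mul_assoc, ← Matrix.mul_assoc, hKey]
    rw [hstep]
    have hQinv : (1 - Aᴴ * A)⁻¹ = hQ.sqrt⁻¹ * hQ.sqrt⁻¹ := by
      rw [← Matrix.mul_inv_rev, hSq]
    have hfirst : hQ.sqrt * (((1 + Aᴴ * Z)ᴴ)⁻¹
        * (((1 + Aᴴ * Z)ᴴ * (1 - Aᴴ * A)⁻¹ * (1 + Aᴴ * Z)) * ((1 + Aᴴ * Z)⁻¹ * hQ.sqrt)))
        = 1 := by
      simp only [Matrix.mul_assoc]
      rw [← Matrix.mul_assoc (((1 + Aᴴ * Z)ᴴ)⁻¹) ((1 + Aᴴ * Z)ᴴ),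
        Matrix.nonsing_inv_mul _ hBHdet, Matrix.one_mul,
        ← Matrix.mul_assoc (1 + Aᴴ * Z) ((1 + Aᴴ * Z)⁻¹),
        Matrix.mul_nonsing_inv _ hBdet, Matrix.one_mul, hQinv,
        Matrix.mul_assoc (hQ.sqrt⁻¹) (hQ.sqrt⁻¹),
        ← Matrix.mul_assoc hQ.sqrt (hQ.sqrt⁻¹),
        Matrix.mul_nonsing_inv _ hSdet, Matrix.one_mul,
        Matrix.nonsing_inv_mul _ hSdet]
    calc 1 - hQ.sqrt * (((1 + Aᴴ * Z)ᴴ)⁻¹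
          * ((((1 + Aᴴ * Z)ᴴ * (1 - Aᴴ * A)⁻¹ * (1 + Aᴴ * Z)) - (1 - Zᴴ * Z))
            * ((1 + Aᴴ * Z)⁻¹ * hQ.sqrt)))
        = 1 - (hQ.sqrt * (((1 + Aᴴ * Z)ᴴ)⁻¹
            * (((1 + Aᴴ * Z)ᴴ * (1 - Aᴴ * A)⁻¹ * (1 + Aᴴ * Z)) * ((1 + Aᴴ * Z)⁻¹ * hQ.sqrt)))
            - hQ.sqrt * (((1 + Aᴴ * Z)ᴴ)⁻¹
              * ((1 - Zᴴ * Z) * ((1 + Aᴴ * Z)⁻¹ * hQ.sqrt)))) := by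
          simp only [Matrix.sub_mul, Matrix.mul_sub]
    _ = hQ.sqrt * (((1 + Aᴴ * Z)ᴴ)⁻¹ * ((1 - Zᴴ * Z) * ((1 + Aᴴ * Z)⁻¹ * hQ.sqrt))) := by
          rw [hfirst]; abel
    _ = ((1 + Aᴴ * Z)⁻¹ * hQ.sqrt)ᴴ * (1 - Zᴴ * Z) * ((1 + Aᴴ * Z)⁻¹ * hQ.sqrt) := by
          simp only [conjTranspose_mul, Matrix.conjTranspose_nonsing_inv, hSherm,
            Matrix.mul_assoc]
  -- conclude
  have hMunit : IsUnit ((1 + Aᴴ * Z)⁻¹ * hQ.sqrt) := by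
    refine IsUnit.mul ?_ ((isUnit_iff_isUnit_det _).mpr hSdet)
    rw [Matrix.isUnit_nonsing_inv_iff]
    exact hBunit
  have hinj := Matrix.mulVec_injective_iff_isUnit.mpr hMunit
  have hMd : (1 - Wᴴ * W).PosDef := by
    rw [hMain]
    refine myConj_posDef hZd _ fun x hx hc => hx (hinj ?_)
    rw [hc, mulVec_zero]
  exact myNormW_lt_one W hMd
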